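/- Let K_0 be the graph obtained from K_{2,4} by adding one edge between two of the four vertices on the larger side. Then γ(K_0) = 1, and the subgraphs H ⊆ K_0 with minimum degree at least 2 and e(H) − v(H) = γ(K_0)·c(H), together with the empty graph, are exactly: the empty graph, K_{2,4}, and K_0 itself. -/

import Mathlib

open Finset

variable {V : Type*}

/-- Sum of edge weights over all edges containing vertex `v`. -/
def vertexDegSum [Fintype V] [DecidableEq V] (w : Sym2 V → ℝ) (v : V) : ℝ :=
  ∑ e ∈ Finset.univ.filter (fun e : Sym2 V => v ∈ e), w e

/-- Total weight of an edge weighting. -/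
def edgeTotal [Fintype V] [DecidableEq V] (w : Sym2 V → ℝ) : ℝ :=
  ∑ e : Sym2 V, w e

/-- A fractional matching of `G`. -/
def IsFracMatching [Fintype V] [DecidableEq V] (G : SimpleGraph V) (w : Sym2 V → ℝ) : Prop :=
  (∀ e, 0 ≤ w e) ∧ (∀ e, e ∉ G.edgeSet → w e = 0) ∧ ∀ v, vertexDegSum w v ≤ 1

/-- A fractional edge cover of `G`. -/
def IsFracEdgeCover [Fintype V] [DecidableEq V] (G : SimpleGraph V) (w : Sym2 V → ℝ) : Prop :=
  (∀ e, 0 ≤ w e) ∧ (∀ e, e ∉ G.edgeSet → w e = 0) ∧ ∀ v, 1 ≤ vertexDegSum w v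

/-- A maximum fractional matching. -/
def IsMaxFracMatching [Fintype V] [DecidableEq V] (G : SimpleGraph V) (w : Sym2 V → ℝ) : Prop :=
  IsFracMatching G w ∧ ∀ w', IsFracMatching G w' → edgeTotal w' ≤ edgeTotal w

/-- A minimum fractional edge cover. -/
def IsMinFracEdgeCover [Fintype V] [DecidableEq V] (G : SimpleGraph V) (w : Sym2 V → ℝ) : Prop :=
  IsFracEdgeCover G w ∧ ∀ w', IsFracEdgeCover G w' → edgeTotal w ≤ edgeTotal w'

/-- A fractional vertex cover of `G`. -/
def IsFracCover (G : SimpleGraph V) (c : V → ℝ) : Prop :=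
  (∀ v, 0 ≤ c v) ∧ ∀ u v, G.Adj u v → 1 ≤ c u + c v

/-- Total weight of a vertex weighting. -/
def coverTotal [Fintype V] (c : V → ℝ) : ℝ := ∑ v, c v

/-- A minimum fractional vertex cover. -/
def IsMinFracCover [Fintype V] (G : SimpleGraph V) (c : V → ℝ) : Prop :=
  IsFracCover G c ∧ ∀ c', IsFracCover G c' → coverTotal c ≤ coverTotal c'

/-- An edge is bad if it has weight 1 in every maximum fractional matching. -/
def IsBadEdge [Fintype V] [DecidableEq V] (G : SimpleGraph V) (e : Sym2 V) : Prop :=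
  ∀ w, IsMaxFracMatching G w → w e = 1

/-- Number of non-isolated vertices of the subgraph given by the edge set S. -/
def suppCard [Fintype V] [DecidableEq V] (S : Finset (Sym2 V)) : ℕ :=
  (Finset.univ.filter (fun v : V => ∃ e ∈ S, v ∈ e)).card

/-- Degree of v in the subgraph given by the edge set S. -/
def degIn [DecidableEq V] (S : Finset (Sym2 V)) (v : V) : ℕ :=
  (S.filter (fun e => v ∈ e)).card

/-- Edge set of K_0 = K_{2,4} plus an edge: vertices 0,1 on the small side,
vertices 2,3,4,5 on the large side, extra edge 2-3. -/
def K0edges : Finset (Sym2 (Fin 6)) :=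
  {s(0, 2), s(0, 3), s(0, 4), s(0, 5), s(1, 2), s(1, 3), s(1, 4), s(1, 5), s(2, 3)}

/-- Edge set of the K_{2,4} subgraph of K_0. -/
def K24edges : Finset (Sym2 (Fin 6)) :=
  {s(0, 2), s(0, 3), s(0, 4), s(0, 5), s(1, 2), s(1, 3), s(1, 4), s(1, 5)}

/-! ### Auxiliary machinery -/

def L : Fin 9 → Sym2 (Fin 6)
  | 0 => s(0,2) | 1 => s(0,3) | 2 => s(0,4) | 3 => s(0,5)
  | 4 => s(1,2) | 5 => s(1,3) | 6 => s(1,4) | 7 => s(1,5)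
  | 8 => s(2,3)

def memB (v : Fin 6) (i : Fin 9) : Bool :=
  match v, i with
  | 0,0 => true | 0,1 => true | 0,2 => true | 0,3 => true
  | 1,4 => true | 1,5 => true | 1,6 => true | 1,7 => true
  | 2,0 => true | 2,4 => true | 2,8 => true
  | 3,1 => true | 3,5 => true | 3,8 => true
  | 4,2 => true | 4,6 => true
  | 5,3 => true | 5,7 => true
  | _,_ => false

lemma memB_iff : ∀ (v : Fin 6) (i : Fin 9), memB v i = true ↔ v ∈ L i := by decide

lemma L_inj : Function.Injective L := by
  have h : ∀ i j : Fin 9, L i = L j → i = j := by decide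
  exact fun i j => h i j

lemma K0_eq : K0edges = Finset.image L Finset.univ := by decide

lemma L_not_diag : ∀ i, ¬ (L i).IsDiag := by decide

lemma fiber_sum (a : Fin 9 → ℕ) (E : Finset (Sym2 (Fin 6))) :
    ∑ e ∈ E, ∑ i ∈ Finset.univ.filter (fun i => L i = e), a i
      = ∑ i ∈ Finset.univ.filter (fun i => L i ∈ E), a i := by
  rw [← Finset.sum_fiberwise_of_maps_to (g := L)
      (fun i hi => (Finset.mem_filter.1 hi).2) a]
  refine Finset.sum_congr rfl fun e he => Finset.sum_congr ?_ fun _ _ => rfl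
  ext i
  simp only [Finset.mem_filter, Finset.mem_univ, true_and]
  constructor
  · exact fun h => ⟨h ▸ he, h⟩
  · exact fun h => h.2

def mOf (a : Fin 9 → ℕ) : Sym2 (Fin 6) → ℕ :=
  fun e => ∑ i ∈ Finset.univ.filter (fun i => L i = e), a i

noncomputable def wOf (a : Fin 9 → ℕ) : Sym2 (Fin 6) → ℝ := fun e => (mOf a e : ℝ) / 2

lemma wOf_deg (a : Fin 9 → ℕ) (v : Fin 6) :
    vertexDegSum (wOf a) v
      = ((∑ i ∈ Finset.univ.filter (fun i => memB v i = true), a i : ℕ) : ℝ) / 2 := by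
  have h := fiber_sum a (Finset.univ.filter (fun e : Sym2 (Fin 6) => v ∈ e))
  have hf : (Finset.univ.filter (fun i =>
      L i ∈ Finset.univ.filter (fun e : Sym2 (Fin 6) => v ∈ e)))
      = Finset.univ.filter (fun i => memB v i = true) := by
    ext i
    simp only [Finset.mem_filter, Finset.mem_univ, true_and]
    exact (memB_iff v i).symm
  rw [hf] at h
  unfold vertexDegSum wOf mOf
  rw [← Finset.sum_div, ← Nat.cast_sum, h]

lemma wOf_total (a : Fin 9 → ℕ) :
    edgeTotal (wOf a) = ((∑ i, a i : ℕ) : ℝ) / 2 := by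
  have h := fiber_sum a Finset.univ
  have hf : (Finset.univ.filter (fun i : Fin 9 => L i ∈ (Finset.univ : Finset (Sym2 (Fin 6)))))
      = Finset.univ := by
    ext i; simp
  rw [hf] at h
  unfold edgeTotal wOf mOf
  rw [← Finset.sum_div, ← Nat.cast_sum, h]

lemma caseT (T : Finset (Fin 9)) (a : Fin 9 → ℕ) (k : ℕ)
    (h1 : ∀ i, a i ≠ 0 → i ∈ T)
    (h2 : ∀ v : Fin 6, ∑ i ∈ Finset.univ.filter (fun i => memB v i = true), a i ≤ 2)
    (h3 : 2 * T.card + k ≤ (∑ i, a i)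
        + 2 * (Finset.univ.filter (fun v : Fin 6 => ∃ i ∈ T, memB v i = true)).card) :
    ∃ w, IsFracMatching (SimpleGraph.fromEdgeSet (↑(T.image L) : Set (Sym2 (Fin 6)))) w ∧
      ((T.image L).card : ℝ) - (suppCard (T.image L) : ℝ) + (k : ℝ)/2 ≤ edgeTotal w := by
  have hcard : (T.image L).card = T.card := Finset.card_image_of_injective T L_inj
  have hsupp : suppCard (T.image L)
      = (Finset.univ.filter (fun v : Fin 6 => ∃ i ∈ T, memB v i = true)).card := by
    unfold suppCard
    congr 1
    ext v
    simp only [Finset.mem_filter, Finset.mem_univ, true_and, Finset.mem_image]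
    constructor
    · rintro ⟨e, ⟨i, hiT, rfl⟩, hv⟩
      exact ⟨i, hiT, (memB_iff v i).2 hv⟩
    · rintro ⟨i, hiT, hb⟩
      exact ⟨L i, ⟨i, hiT, rfl⟩, (memB_iff v i).1 hb⟩
  refine ⟨wOf a, ⟨fun e => by unfold wOf; positivity, fun e he => ?_, fun v => ?_⟩, ?_⟩
  · by_contra h
    have hm : mOf a e ≠ 0 := fun h0 => h (by simp [wOf, h0])
    obtain ⟨i, hi, hai⟩ := Finset.exists_ne_zero_of_sum_ne_zero hm
    have hLi : L i = e := (Finset.mem_filter.1 hi).2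
    refine he ?_
    rw [SimpleGraph.edgeSet_fromEdgeSet]
    exact ⟨Finset.mem_coe.2 (hLi ▸ Finset.mem_image_of_mem L (h1 i hai)),
      fun hd => L_not_diag i (by rw [hLi]; exact hd)⟩
  · rw [wOf_deg]
    have h2v := h2 v
    rw [div_le_one (by norm_num)]
    exact_mod_cast h2v
  · rw [wOf_total, hcard, hsupp]
    have h3' : (2 * T.card + k : ℝ) ≤ (∑ i, a i : ℕ)
        + 2 * ((Finset.univ.filter (fun v : Fin 6 => ∃ i ∈ T, memB v i = true)).card : ℝ) := by
      exact_mod_cast h3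
    push_cast at h3' ⊢
    linarith

def B0 : Finset (Fin 9) := {0, 1, 4, 5}
def B1 : Finset (Fin 9) := {0, 2, 4, 6}
def B2 : Finset (Fin 9) := {1, 2, 5, 6}
def B3 : Finset (Fin 9) := {0, 1, 2, 4, 5, 6}
def B4 : Finset (Fin 9) := {0, 3, 4, 7}
def B5 : Finset (Fin 9) := {1, 3, 5, 7}
def B6 : Finset (Fin 9) := {0, 1, 3, 4, 5, 7}
def B7 : Finset (Fin 9) := {2, 3, 6, 7}
def B8 : Finset (Fin 9) := {0, 2, 3, 4, 6, 7}
def B9 : Finset (Fin 9) := {1, 2, 3, 5, 6, 7}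
def B10 : Finset (Fin 9) := {0, 1, 2, 3, 4, 5, 6, 7}
def B11 : Finset (Fin 9) := {0, 1, 8}
def B12 : Finset (Fin 9) := {4, 5, 8}
def B13 : Finset (Fin 9) := {0, 1, 4, 5, 8}
def B14 : Finset (Fin 9) := {1, 2, 4, 6, 8}
def B15 : Finset (Fin 9) := {0, 1, 2, 4, 6, 8}
def B16 : Finset (Fin 9) := {0, 2, 5, 6, 8}
def B17 : Finset (Fin 9) := {0, 1, 2, 5, 6, 8}
def B18 : Finset (Fin 9) := {0, 2, 4, 5, 6, 8}
def B19 : Finset (Fin 9) := {1, 2, 4, 5, 6, 8}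
def B20 : Finset (Fin 9) := {0, 1, 2, 4, 5, 6, 8}
def B21 : Finset (Fin 9) := {1, 3, 4, 7, 8}
def B22 : Finset (Fin 9) := {0, 1, 3, 4, 7, 8}
def B23 : Finset (Fin 9) := {0, 3, 5, 7, 8}
def B24 : Finset (Fin 9) := {0, 1, 3, 5, 7, 8}
def B25 : Finset (Fin 9) := {0, 3, 4, 5, 7, 8}
def B26 : Finset (Fin 9) := {1, 3, 4, 5, 7, 8}
def B27 : Finset (Fin 9) := {0, 1, 3, 4, 5, 7, 8}
def B28 : Finset (Fin 9) := {0, 1, 2, 3, 6, 7, 8}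
def B29 : Finset (Fin 9) := {1, 2, 3, 4, 6, 7, 8}
def B30 : Finset (Fin 9) := {0, 1, 2, 3, 4, 6, 7, 8}
def B31 : Finset (Fin 9) := {0, 2, 3, 5, 6, 7, 8}
def B32 : Finset (Fin 9) := {0, 1, 2, 3, 5, 6, 7, 8}
def B33 : Finset (Fin 9) := {2, 3, 4, 5, 6, 7, 8}
def B34 : Finset (Fin 9) := {0, 2, 3, 4, 5, 6, 7, 8}
def B35 : Finset (Fin 9) := {1, 2, 3, 4, 5, 6, 7, 8}
def B36 : Finset (Fin 9) := {0, 1, 2, 3, 4, 5, 6, 7, 8}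

set_option maxRecDepth 100000 in
set_option synthInstance.maxHeartbeats 400000 in
set_option synthInstance.maxSize 100000 in
lemma classifyB : ∀ T : Finset (Fin 9),
    (∀ v : Fin 6, (∃ i ∈ T, memB v i = true) → 2 ≤ (T.filter (fun i => memB v i = true)).card) →
    (T = ∅ ∨ T = B0 ∨ T = B1 ∨ T = B2 ∨ T = B3 ∨ T = B4 ∨ T = B5 ∨ T = B6 ∨ T = B7 ∨ T = B8 ∨ T = B9 ∨ T = B10 ∨ T = B11 ∨ T = B12 ∨ T = B13 ∨ T = B14 ∨ T = B15 ∨ T = B16 ∨ T = B17 ∨ T = B18 ∨ T = B19 ∨ T = B20 ∨ T = B21 ∨ T = B22 ∨ T = B23 ∨ T = B24 ∨ T = B25 ∨ T = B26 ∨ T = B27 ∨ T = B28 ∨ T = B29 ∨ T = B30 ∨ T = B31 ∨ T = B32 ∨ T = B33 ∨ T = B34 ∨ T = B35 ∨ T = B36) := by decide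

lemma minDegCase (S : Finset (Sym2 (Fin 6))) (hsub : S ⊆ K0edges)
    (hdeg : ∀ v : Fin 6, (∃ e ∈ S, v ∈ e) → 2 ≤ degIn S v) :
    (∃ w, IsFracMatching (SimpleGraph.fromEdgeSet (↑S : Set (Sym2 (Fin 6)))) w ∧
        (S.card : ℝ) - (suppCard S : ℝ) ≤ edgeTotal w) ∧
    (S ≠ ∅ → S ≠ K24edges → S ≠ K0edges →
      ∃ w, IsFracMatching (SimpleGraph.fromEdgeSet (↑S : Set (Sym2 (Fin 6)))) w ∧
        (S.card : ℝ) - (suppCard S : ℝ) + 1/2 ≤ edgeTotal w) := by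
  classical
  have hST : S = (Finset.univ.filter (fun i => L i ∈ S)).image L := by
    ext e
    constructor
    · intro he
      have h2 : e ∈ Finset.image L Finset.univ := K0_eq ▸ hsub he
      obtain ⟨i, -, rfl⟩ := Finset.mem_image.1 h2
      exact Finset.mem_image_of_mem L (Finset.mem_filter.2 ⟨Finset.mem_univ i, he⟩)
    · intro he
      obtain ⟨i, hi, rfl⟩ := Finset.mem_image.1 he
      exact (Finset.mem_filter.1 hi).2
  set T : Finset (Fin 9) := Finset.univ.filter (fun i => L i ∈ S) with hT
  have hdegT : ∀ v : Fin 6, (∃ i ∈ T, memB v i = true) →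
      2 ≤ (T.filter (fun i => memB v i = true)).card := by
    intro v hvT
    obtain ⟨i, hiT, hb⟩ := hvT
    have hx : (∃ e ∈ S, v ∈ e) :=
      ⟨L i, hST ▸ Finset.mem_image_of_mem L hiT, (memB_iff v i).1 hb⟩
    have h2 := hdeg v hx
    have h3 : degIn S v = (T.filter (fun i => memB v i = true)).card := by
      rw [hST]
      unfold degIn
      rw [show ((T.image L).filter (fun e => v ∈ e)) = (T.filter (fun i => memB v i = true)).image L by
        ext e
        simp only [Finset.mem_filter, Finset.mem_image]
        constructor
        · rintro ⟨⟨i', hiT', rfl⟩, hv⟩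
          exact ⟨i', ⟨hiT', (memB_iff _ _).2 hv⟩, rfl⟩
        · rintro ⟨i', ⟨hiT', hb'⟩, rfl⟩
          exact ⟨⟨i', hiT', rfl⟩, (memB_iff _ _).1 hb'⟩]
      exact Finset.card_image_of_injective _ L_inj
    exact h3 ▸ h2
  have hcl := classifyB T hdegT
  rcases hcl with h | h | h | h | h | h | h | h | h | h | h | h | h | h | h | h | h | h | h | h | h | h | h | h | h | h | h | h | h | h | h | h | h | h | h | h | h | h
  · rw [hST, h]
    simp only [Finset.image_empty]
    refine ⟨⟨(fun _ => 0), ⟨fun _ => le_refl 0, fun _ _ => rfl, fun v => by simp [vertexDegSum]⟩, ?_⟩,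
      fun hne _ _ => absurd rfl hne⟩
    have h1 : suppCard (∅ : Finset (Sym2 (Fin 6))) = 0 := by decide
    have h2 : edgeTotal (fun _ : Sym2 (Fin 6) => (0:ℝ)) = 0 := by simp [edgeTotal]
    simp [h1, h2]
  · rw [hST, h]
    obtain ⟨w, hw, hv⟩ := caseT B0 ![0,0,0,0,0,1,0,0,0] 1 (by decide) (by decide) (by decide)
    norm_num at hv
    exact ⟨⟨w, hw, by linarith⟩, fun _ _ _ => ⟨w, hw, by linarith⟩⟩
  · rw [hST, h]
    obtain ⟨w, hw, hv⟩ := caseT B1 ![0,0,0,0,0,0,1,0,0] 1 (by decide) (by decide) (by decide)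
    norm_num at hv
    exact ⟨⟨w, hw, by linarith⟩, fun _ _ _ => ⟨w, hw, by linarith⟩⟩
  · rw [hST, h]
    obtain ⟨w, hw, hv⟩ := caseT B2 ![0,0,0,0,0,0,1,0,0] 1 (by decide) (by decide) (by decide)
    norm_num at hv
    exact ⟨⟨w, hw, by linarith⟩, fun _ _ _ => ⟨w, hw, by linarith⟩⟩
  · rw [hST, h]
    obtain ⟨w, hw, hv⟩ := caseT B3 ![0,0,1,0,0,1,1,0,0] 1 (by decide) (by decide) (by decide)
    norm_num at hv
    exact ⟨⟨w, hw, by linarith⟩, fun _ _ _ => ⟨w, hw, by linarith⟩⟩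
  · rw [hST, h]
    obtain ⟨w, hw, hv⟩ := caseT B4 ![0,0,0,0,0,0,0,1,0] 1 (by decide) (by decide) (by decide)
    norm_num at hv
    exact ⟨⟨w, hw, by linarith⟩, fun _ _ _ => ⟨w, hw, by linarith⟩⟩
  · rw [hST, h]
    obtain ⟨w, hw, hv⟩ := caseT B5 ![0,0,0,0,0,0,0,1,0] 1 (by decide) (by decide) (by decide)
    norm_num at hv
    exact ⟨⟨w, hw, by linarith⟩, fun _ _ _ => ⟨w, hw, by linarith⟩⟩
  · rw [hST, h]
    obtain ⟨w, hw, hv⟩ := caseT B6 ![0,0,0,1,0,1,0,1,0] 1 (by decide) (by decide) (by decide)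
    norm_num at hv
    exact ⟨⟨w, hw, by linarith⟩, fun _ _ _ => ⟨w, hw, by linarith⟩⟩
  · rw [hST, h]
    obtain ⟨w, hw, hv⟩ := caseT B7 ![0,0,0,0,0,0,0,1,0] 1 (by decide) (by decide) (by decide)
    norm_num at hv
    exact ⟨⟨w, hw, by linarith⟩, fun _ _ _ => ⟨w, hw, by linarith⟩⟩
  · rw [hST, h]
    obtain ⟨w, hw, hv⟩ := caseT B8 ![0,0,0,1,0,0,1,1,0] 1 (by decide) (by decide) (by decide)
    norm_num at hv
    exact ⟨⟨w, hw, by linarith⟩, fun _ _ _ => ⟨w, hw, by linarith⟩⟩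
  · rw [hST, h]
    obtain ⟨w, hw, hv⟩ := caseT B9 ![0,0,0,1,0,0,1,1,0] 1 (by decide) (by decide) (by decide)
    norm_num at hv
    exact ⟨⟨w, hw, by linarith⟩, fun _ _ _ => ⟨w, hw, by linarith⟩⟩
  · rw [hST, h]
    obtain ⟨w, hw, hv⟩ := caseT B10 ![0,0,0,2,0,0,2,0,0] 0 (by decide) (by decide) (by decide)
    norm_num at hv
    exact ⟨⟨w, hw, by linarith⟩, fun _ hne _ => absurd (by decide : B10.image L = K24edges) hne⟩
  · rw [hST, h]
    obtain ⟨w, hw, hv⟩ := caseT B11 ![0,0,0,0,0,0,0,0,1] 1 (by decide) (by decide) (by decide)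
    norm_num at hv
    exact ⟨⟨w, hw, by linarith⟩, fun _ _ _ => ⟨w, hw, by linarith⟩⟩
  · rw [hST, h]
    obtain ⟨w, hw, hv⟩ := caseT B12 ![0,0,0,0,0,0,0,0,1] 1 (by decide) (by decide) (by decide)
    norm_num at hv
    exact ⟨⟨w, hw, by linarith⟩, fun _ _ _ => ⟨w, hw, by linarith⟩⟩
  · rw [hST, h]
    obtain ⟨w, hw, hv⟩ := caseT B13 ![0,0,0,0,1,1,0,0,1] 1 (by decide) (by decide) (by decide)
    norm_num at hv
    exact ⟨⟨w, hw, by linarith⟩, fun _ _ _ => ⟨w, hw, by linarith⟩⟩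
  · rw [hST, h]
    obtain ⟨w, hw, hv⟩ := caseT B14 ![0,0,0,0,0,0,0,0,1] 1 (by decide) (by decide) (by decide)
    norm_num at hv
    exact ⟨⟨w, hw, by linarith⟩, fun _ _ _ => ⟨w, hw, by linarith⟩⟩
  · rw [hST, h]
    obtain ⟨w, hw, hv⟩ := caseT B15 ![0,0,0,0,0,0,1,0,2] 1 (by decide) (by decide) (by decide)
    norm_num at hv
    exact ⟨⟨w, hw, by linarith⟩, fun _ _ _ => ⟨w, hw, by linarith⟩⟩
  · rw [hST, h]
    obtain ⟨w, hw, hv⟩ := caseT B16 ![0,0,0,0,0,0,0,0,1] 1 (by decide) (by decide) (by decide)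
    norm_num at hv
    exact ⟨⟨w, hw, by linarith⟩, fun _ _ _ => ⟨w, hw, by linarith⟩⟩
  · rw [hST, h]
    obtain ⟨w, hw, hv⟩ := caseT B17 ![0,0,0,0,0,0,1,0,2] 1 (by decide) (by decide) (by decide)
    norm_num at hv
    exact ⟨⟨w, hw, by linarith⟩, fun _ _ _ => ⟨w, hw, by linarith⟩⟩
  · rw [hST, h]
    obtain ⟨w, hw, hv⟩ := caseT B18 ![0,0,0,0,0,0,1,0,2] 1 (by decide) (by decide) (by decide)
    norm_num at hv
    exact ⟨⟨w, hw, by linarith⟩, fun _ _ _ => ⟨w, hw, by linarith⟩⟩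
  · rw [hST, h]
    obtain ⟨w, hw, hv⟩ := caseT B19 ![0,0,0,0,0,0,1,0,2] 1 (by decide) (by decide) (by decide)
    norm_num at hv
    exact ⟨⟨w, hw, by linarith⟩, fun _ _ _ => ⟨w, hw, by linarith⟩⟩
  · rw [hST, h]
    obtain ⟨w, hw, hv⟩ := caseT B20 ![0,0,2,0,1,1,0,0,1] 1 (by decide) (by decide) (by decide)
    norm_num at hv
    exact ⟨⟨w, hw, by linarith⟩, fun _ _ _ => ⟨w, hw, by linarith⟩⟩
  · rw [hST, h]
    obtain ⟨w, hw, hv⟩ := caseT B21 ![0,0,0,0,0,0,0,0,1] 1 (by decide) (by decide) (by decide)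
    norm_num at hv
    exact ⟨⟨w, hw, by linarith⟩, fun _ _ _ => ⟨w, hw, by linarith⟩⟩
  · rw [hST, h]
    obtain ⟨w, hw, hv⟩ := caseT B22 ![0,0,0,0,0,0,0,1,2] 1 (by decide) (by decide) (by decide)
    norm_num at hv
    exact ⟨⟨w, hw, by linarith⟩, fun _ _ _ => ⟨w, hw, by linarith⟩⟩
  · rw [hST, h]
    obtain ⟨w, hw, hv⟩ := caseT B23 ![0,0,0,0,0,0,0,0,1] 1 (by decide) (by decide) (by decide)
    norm_num at hv
    exact ⟨⟨w, hw, by linarith⟩, fun _ _ _ => ⟨w, hw, by linarith⟩⟩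
  · rw [hST, h]
    obtain ⟨w, hw, hv⟩ := caseT B24 ![0,0,0,0,0,0,0,1,2] 1 (by decide) (by decide) (by decide)
    norm_num at hv
    exact ⟨⟨w, hw, by linarith⟩, fun _ _ _ => ⟨w, hw, by linarith⟩⟩
  · rw [hST, h]
    obtain ⟨w, hw, hv⟩ := caseT B25 ![0,0,0,0,0,0,0,1,2] 1 (by decide) (by decide) (by decide)
    norm_num at hv
    exact ⟨⟨w, hw, by linarith⟩, fun _ _ _ => ⟨w, hw, by linarith⟩⟩
  · rw [hST, h]
    obtain ⟨w, hw, hv⟩ := caseT B26 ![0,0,0,0,0,0,0,1,2] 1 (by decide) (by decide) (by decide)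
    norm_num at hv
    exact ⟨⟨w, hw, by linarith⟩, fun _ _ _ => ⟨w, hw, by linarith⟩⟩
  · rw [hST, h]
    obtain ⟨w, hw, hv⟩ := caseT B27 ![0,0,0,2,1,1,0,0,1] 1 (by decide) (by decide) (by decide)
    norm_num at hv
    exact ⟨⟨w, hw, by linarith⟩, fun _ _ _ => ⟨w, hw, by linarith⟩⟩
  · rw [hST, h]
    obtain ⟨w, hw, hv⟩ := caseT B28 ![0,0,0,0,0,0,0,1,2] 1 (by decide) (by decide) (by decide)
    norm_num at hv
    exact ⟨⟨w, hw, by linarith⟩, fun _ _ _ => ⟨w, hw, by linarith⟩⟩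
  · rw [hST, h]
    obtain ⟨w, hw, hv⟩ := caseT B29 ![0,0,0,0,0,0,0,1,2] 1 (by decide) (by decide) (by decide)
    norm_num at hv
    exact ⟨⟨w, hw, by linarith⟩, fun _ _ _ => ⟨w, hw, by linarith⟩⟩
  · rw [hST, h]
    obtain ⟨w, hw, hv⟩ := caseT B30 ![0,0,0,1,0,0,1,1,2] 1 (by decide) (by decide) (by decide)
    norm_num at hv
    exact ⟨⟨w, hw, by linarith⟩, fun _ _ _ => ⟨w, hw, by linarith⟩⟩
  · rw [hST, h]
    obtain ⟨w, hw, hv⟩ := caseT B31 ![0,0,0,0,0,0,0,1,2] 1 (by decide) (by decide) (by decide)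
    norm_num at hv
    exact ⟨⟨w, hw, by linarith⟩, fun _ _ _ => ⟨w, hw, by linarith⟩⟩
  · rw [hST, h]
    obtain ⟨w, hw, hv⟩ := caseT B32 ![0,0,0,1,0,0,1,1,2] 1 (by decide) (by decide) (by decide)
    norm_num at hv
    exact ⟨⟨w, hw, by linarith⟩, fun _ _ _ => ⟨w, hw, by linarith⟩⟩
  · rw [hST, h]
    obtain ⟨w, hw, hv⟩ := caseT B33 ![0,0,0,0,0,0,0,1,2] 1 (by decide) (by decide) (by decide)
    norm_num at hv
    exact ⟨⟨w, hw, by linarith⟩, fun _ _ _ => ⟨w, hw, by linarith⟩⟩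
  · rw [hST, h]
    obtain ⟨w, hw, hv⟩ := caseT B34 ![0,0,0,1,0,0,1,1,2] 1 (by decide) (by decide) (by decide)
    norm_num at hv
    exact ⟨⟨w, hw, by linarith⟩, fun _ _ _ => ⟨w, hw, by linarith⟩⟩
  · rw [hST, h]
    obtain ⟨w, hw, hv⟩ := caseT B35 ![0,0,0,1,0,0,1,1,2] 1 (by decide) (by decide) (by decide)
    norm_num at hv
    exact ⟨⟨w, hw, by linarith⟩, fun _ _ _ => ⟨w, hw, by linarith⟩⟩
  · rw [hST, h]
    obtain ⟨w, hw, hv⟩ := caseT B36 ![0,0,0,2,0,0,2,0,2] 0 (by decide) (by decide) (by decide)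
    norm_num at hv
    exact ⟨⟨w, hw, by linarith⟩, fun _ _ hne => absurd (by decide : B36.image L = K0edges) hne⟩


lemma matching_mono {s t : Set (Sym2 (Fin 6))} (hst : s ⊆ t) {w : Sym2 (Fin 6) → ℝ}
    (h : IsFracMatching (SimpleGraph.fromEdgeSet s) w) :
    IsFracMatching (SimpleGraph.fromEdgeSet t) w := by
  refine ⟨h.1, fun e he => h.2.1 e fun hmem => he ?_, h.2.2⟩
  exact SimpleGraph.edgeSet_mono (SimpleGraph.fromEdgeSet_mono hst) hmem

lemma exists_matching (S : Finset (Sym2 (Fin 6))) : S ⊆ K0edges →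
    ∃ w, IsFracMatching (SimpleGraph.fromEdgeSet (↑S : Set (Sym2 (Fin 6)))) w ∧
      (S.card : ℝ) - (suppCard S : ℝ) ≤ edgeTotal w := by
  induction S using Finset.strongInduction with
  | _ S ih =>
    intro hsub
    by_cases hdeg : ∀ v : Fin 6, (∃ e ∈ S, v ∈ e) → 2 ≤ degIn S v
    · exact (minDegCase S hsub hdeg).1
    · push_neg at hdeg
      obtain ⟨v, hv, hlt⟩ := hdeg
      obtain ⟨e, heS, hve⟩ := hv
      have hdeg1 : degIn S v = 1 := by
        have h1 : 0 < degIn S v :=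
          Finset.card_pos.2 ⟨e, Finset.mem_filter.2 ⟨heS, hve⟩⟩
        omega
      obtain ⟨w, hw, hval⟩ := ih (S.erase e) (Finset.erase_ssubset heS)
        ((Finset.erase_subset e S).trans hsub)
      refine ⟨w, matching_mono (Finset.coe_subset.2 (Finset.erase_subset e S)) hw, ?_⟩
      have hc : (S.erase e).card + 1 = S.card := Finset.card_erase_add_one heS
      have hsupp : suppCard (S.erase e) + 1 ≤ suppCard S := by
        unfold suppCard
        have hvB : v ∈ Finset.univ.filter (fun u : Fin 6 => ∃ e' ∈ S, u ∈ e') :=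
          Finset.mem_filter.2 ⟨Finset.mem_univ v, e, heS, hve⟩
        have hvA : v ∉ Finset.univ.filter (fun u : Fin 6 => ∃ e' ∈ S.erase e, u ∈ e') := by
          intro hmem
          obtain ⟨e', he', hve'⟩ := (Finset.mem_filter.1 hmem).2
          have hne : e' ≠ e := Finset.ne_of_mem_erase he'
          have hsubset : ({e', e} : Finset (Sym2 (Fin 6))) ⊆ S.filter (fun x => v ∈ x) := by
            intro x hx
            rcases Finset.mem_insert.1 hx with rfl | hx
            · exact Finset.mem_filter.2 ⟨Finset.mem_of_mem_erase he', hve'⟩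
            · rw [Finset.mem_singleton.1 hx]
              exact Finset.mem_filter.2 ⟨heS, hve⟩
          have hle := Finset.card_le_card hsubset
          rw [Finset.card_pair hne] at hle
          unfold degIn at hdeg1
          omega
        have hAB : Finset.univ.filter (fun u : Fin 6 => ∃ e' ∈ S.erase e, u ∈ e')
            ⊆ Finset.univ.filter (fun u : Fin 6 => ∃ e' ∈ S, u ∈ e') := by
          intro u hu
          obtain ⟨e', he', hve'⟩ := (Finset.mem_filter.1 hu).2
          exact Finset.mem_filter.2 ⟨Finset.mem_univ u, e', Finset.mem_of_mem_erase he', hve'⟩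
        calc (Finset.univ.filter (fun u : Fin 6 => ∃ e' ∈ S.erase e, u ∈ e')).card + 1
            = (insert v (Finset.univ.filter (fun u : Fin 6 => ∃ e' ∈ S.erase e, u ∈ e'))).card :=
              (Finset.card_insert_of_notMem hvA).symm
          _ ≤ (Finset.univ.filter (fun u : Fin 6 => ∃ e' ∈ S, u ∈ e')).card :=
              Finset.card_le_card (Finset.insert_subset hvB hAB)
      have h1 : (S.card : ℝ) = ((S.erase e).card : ℝ) + 1 := by exact_mod_cast hc.symm
      have h2 : ((suppCard (S.erase e) : ℕ) : ℝ) + 1 ≤ (suppCard S : ℝ) := by exact_mod_cast hsupp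
      linarith

lemma weak_duality {G : SimpleGraph (Fin 6)} {w : Sym2 (Fin 6) → ℝ} {c : Fin 6 → ℝ}
    (hw : IsFracMatching G w) (hc : IsFracCover G c) :
    edgeTotal w ≤ coverTotal c := by
  obtain ⟨hw0, hwsupp, hwdeg⟩ := hw
  obtain ⟨hc0, hcov⟩ := hc
  have key : ∀ e : Sym2 (Fin 6),
      w e ≤ w e * ∑ v ∈ Finset.univ.filter (fun v => v ∈ e), c v := by
    intro e
    induction e using Sym2.ind with
    | _ a b =>
      by_cases h : w s(a,b) = 0
      · simp [h]
      · have heG : s(a,b) ∈ G.edgeSet := by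
          by_contra hne
          exact h (hwsupp _ hne)
        have hadj : G.Adj a b := G.mem_edgeSet.1 heG
        have hne : a ≠ b := hadj.ne
        have hfil : Finset.univ.filter (fun v => v ∈ s(a,b)) = ({a, b} : Finset (Fin 6)) := by
          ext u
          simp [Sym2.mem_iff, Finset.mem_insert]
        rw [hfil, Finset.sum_pair hne]
        have h1 := hcov a b hadj
        have h2 := hw0 s(a,b)
        nlinarith
  have exch : ∑ e : Sym2 (Fin 6), w e * ∑ v ∈ Finset.univ.filter (fun v => v ∈ e), c v
      = ∑ v : Fin 6, c v * vertexDegSum w v := by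
    have lhs : ∀ e : Sym2 (Fin 6), w e * ∑ v ∈ Finset.univ.filter (fun v => v ∈ e), c v
        = ∑ v : Fin 6, if v ∈ e then w e * c v else 0 := by
      intro e
      rw [Finset.mul_sum, Finset.sum_filter]
    have rhs : ∀ v : Fin 6, c v * vertexDegSum w v
        = ∑ e : Sym2 (Fin 6), if v ∈ e then w e * c v else 0 := by
      intro v
      unfold vertexDegSum
      rw [Finset.mul_sum, Finset.sum_filter]
      exact Finset.sum_congr rfl fun e _ => by split <;> ring
    calc ∑ e : Sym2 (Fin 6), w e * ∑ v ∈ Finset.univ.filter (fun v => v ∈ e), c v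
        = ∑ e : Sym2 (Fin 6), ∑ v : Fin 6, if v ∈ e then w e * c v else 0 :=
          Finset.sum_congr rfl fun e _ => lhs e
      _ = ∑ v : Fin 6, ∑ e : Sym2 (Fin 6), if v ∈ e then w e * c v else 0 := Finset.sum_comm
      _ = ∑ v : Fin 6, c v * vertexDegSum w v :=
          Finset.sum_congr rfl fun v _ => (rhs v).symm
  calc edgeTotal w = ∑ e : Sym2 (Fin 6), w e := rfl
    _ ≤ ∑ e : Sym2 (Fin 6), w e * ∑ v ∈ Finset.univ.filter (fun v => v ∈ e), c v :=
        Finset.sum_le_sum fun e _ => key e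
    _ = ∑ v : Fin 6, c v * vertexDegSum w v := exch
    _ ≤ ∑ v : Fin 6, c v := by
        refine Finset.sum_le_sum fun v _ => ?_
        have h1 := hwdeg v
        have h2 := hc0 v
        nlinarith
    _ = coverTotal c := rfl

noncomputable def c24 : Fin 6 → ℝ := ![1,1,0,0,0,0]
noncomputable def cK0 : Fin 6 → ℝ := ![1,1,1,0,0,0]

lemma c24_nonneg : ∀ v, 0 ≤ c24 v := by
  intro v; fin_cases v <;> norm_num [c24, Matrix.cons_val_succ]

lemma cK0_nonneg : ∀ v, 0 ≤ cK0 v := by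
  intro v; fin_cases v <;> norm_num [cK0, Matrix.cons_val_succ]

lemma c24_total : coverTotal c24 = 2 := by
  norm_num [coverTotal, Fin.sum_univ_six, c24, Matrix.cons_val_succ, show ![1,1,0,0,0,0] (5:Fin 6) = (0:ℝ) from rfl, show ![1,1,0,0,0,0] (2:Fin 6) = (0:ℝ) from rfl, show ![1,1,0,0,0,0] (3:Fin 6) = (0:ℝ) from rfl, show ![1,1,0,0,0,0] (4:Fin 6) = (0:ℝ) from rfl]

lemma cK0_total : coverTotal cK0 = 3 := by
  norm_num [coverTotal, Fin.sum_univ_six, cK0, Matrix.cons_val_succ, show ![1,1,1,0,0,0] (5:Fin 6) = (0:ℝ) from rfl, show ![1,1,1,0,0,0] (2:Fin 6) = (1:ℝ) from rfl, show ![1,1,1,0,0,0] (3:Fin 6) = (0:ℝ) from rfl, show ![1,1,1,0,0,0] (4:Fin 6) = (0:ℝ) from rfl]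

lemma c24_cover : IsFracCover (SimpleGraph.fromEdgeSet (↑K24edges : Set (Sym2 (Fin 6)))) c24 := by
  refine ⟨c24_nonneg, fun u v huv => ?_⟩
  rw [SimpleGraph.fromEdgeSet_adj] at huv
  have hm : s(u,v) ∈ K24edges := huv.1
  have key : ∀ a b : Fin 6, s(a,b) ∈ K24edges → ((a = 0 ∨ a = 1) ∨ (b = 0 ∨ b = 1)) := by decide
  have h1 := c24_nonneg u
  have h2 := c24_nonneg v
  have e0 : c24 0 = 1 := by norm_num [c24, Matrix.cons_val_succ]
  have e1 : c24 1 = 1 := by norm_num [c24, Matrix.cons_val_succ]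
  rcases key u v hm with (rfl | rfl) | (rfl | rfl)
  · rw [e0]; linarith
  · rw [e1]; linarith
  · rw [e0]; linarith
  · rw [e1]; linarith

lemma cK0_cover : IsFracCover (SimpleGraph.fromEdgeSet (↑K0edges : Set (Sym2 (Fin 6)))) cK0 := by
  refine ⟨cK0_nonneg, fun u v huv => ?_⟩
  rw [SimpleGraph.fromEdgeSet_adj] at huv
  have hm : s(u,v) ∈ K0edges := huv.1
  have key : ∀ a b : Fin 6, s(a,b) ∈ K0edges →
      ((a = 0 ∨ a = 1 ∨ a = 2) ∨ (b = 0 ∨ b = 1 ∨ b = 2)) := by decide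
  have h1 := cK0_nonneg u
  have h2 := cK0_nonneg v
  have e0 : cK0 0 = 1 := by norm_num [cK0, Matrix.cons_val_succ]
  have e1 : cK0 1 = 1 := by norm_num [cK0, Matrix.cons_val_succ]
  have e2 : cK0 2 = 1 := by norm_num [cK0, Matrix.cons_val_succ, show ![1,1,1,0,0,0] (2:Fin 6) = (1:ℝ) from rfl]
  rcases key u v hm with (rfl | rfl | rfl) | (rfl | rfl | rfl)
  · rw [e0]; linarith
  · rw [e1]; linarith
  · rw [e2]; linarith
  · rw [e0]; linarith
  · rw [e1]; linarith
  · rw [e2]; linarith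

lemma c24_min : IsMinFracCover (SimpleGraph.fromEdgeSet (↑K24edges : Set (Sym2 (Fin 6)))) c24 := by
  refine ⟨c24_cover, fun c' hc' => ?_⟩
  obtain ⟨w, hw, hval⟩ := (minDegCase K24edges (by decide) (by decide)).1
  have hd := weak_duality hw hc'
  have h8 : (K24edges.card : ℝ) = 8 := by norm_num [show K24edges.card = 8 from by decide]
  have h6 : ((suppCard K24edges : ℕ) : ℝ) = 6 := by norm_num [show suppCard K24edges = 6 from by decide]
  rw [c24_total]
  rw [h8, h6] at hval
  linarith

lemma cK0_min : IsMinFracCover (SimpleGraph.fromEdgeSet (↑K0edges : Set (Sym2 (Fin 6)))) cK0 := by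
  refine ⟨cK0_cover, fun c' hc' => ?_⟩
  obtain ⟨w, hw, hval⟩ := (minDegCase K0edges (by decide) (by decide)).1
  have hd := weak_duality hw hc'
  have h9 : (K0edges.card : ℝ) = 9 := by norm_num [show K0edges.card = 9 from by decide]
  have h6 : ((suppCard K0edges : ℕ) : ℝ) = 6 := by norm_num [show suppCard K0edges = 6 from by decide]
  rw [cK0_total]
  rw [h9, h6] at hval
  linarith

/-- γ(K_0) = 1: every subgraph H ⊆ K_0 satisfies e(H) - v(H) ≤ c(H), and the
subgraphs of minimum degree ≥ 2 attaining e(H) - v(H) = 1 · c(H), together with the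
empty graph, are exactly the empty graph, K_{2,4} and K_0 itself. -/
theorem K0_gamma_eq_one_and_contributing_subgraphs :
    (∀ S : Finset (Sym2 (Fin 6)), S ⊆ K0edges →
      ∀ c : Fin 6 → ℝ, IsMinFracCover (SimpleGraph.fromEdgeSet (↑S : Set (Sym2 (Fin 6)))) c →
        (S.card : ℝ) - (suppCard S : ℝ) ≤ coverTotal c) ∧
    (∀ S : Finset (Sym2 (Fin 6)), S ⊆ K0edges →
      (∀ v : Fin 6, (∃ e ∈ S, v ∈ e) → 2 ≤ degIn S v) →
      ((∃ c : Fin 6 → ℝ,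
          IsMinFracCover (SimpleGraph.fromEdgeSet (↑S : Set (Sym2 (Fin 6)))) c ∧
          (S.card : ℝ) - (suppCard S : ℝ) = coverTotal c) ↔
        (S = ∅ ∨ S = K24edges ∨ S = K0edges))) := by
  constructor
  · intro S hsub c hc
    obtain ⟨w, hw, hval⟩ := exists_matching S hsub
    have hd := weak_duality hw hc.1
    linarith
  · intro S hsub hdeg
    constructor
    · rintro ⟨c, hc, heq⟩
      by_contra hno
      push_neg at hno
      obtain ⟨h1, h2, h3⟩ := hno
      obtain ⟨w, hw, hval⟩ := (minDegCase S hsub hdeg).2 (Finset.nonempty_iff_ne_empty.1 h1) h2 h3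
      have hd := weak_duality hw hc.1
      linarith
    · rintro (rfl | rfl | rfl)
      · refine ⟨fun _ => 0, ⟨⟨fun _ => le_refl 0, fun u v huv => ?_⟩, fun c' hc' => ?_⟩, ?_⟩
        · rw [SimpleGraph.fromEdgeSet_adj] at huv
          simpa using huv.1
        · have h0 : (0:ℝ) ≤ coverTotal c' := Finset.sum_nonneg fun v _ => hc'.1 v
          simpa [coverTotal] using h0
        · have h0 : suppCard (∅ : Finset (Sym2 (Fin 6))) = 0 := by decide
          simp [coverTotal, h0]
      · refine ⟨c24, c24_min, ?_⟩
        have h8 : (K24edges.card : ℝ) = 8 := by norm_num [show K24edges.card = 8 from by decide]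
        have h6 : ((suppCard K24edges : ℕ) : ℝ) = 6 := by
          norm_num [show suppCard K24edges = 6 from by decide]
        rw [h8, h6, c24_total]
        norm_num
      · refine ⟨cK0, cK0_min, ?_⟩
        have h9 : (K0edges.card : ℝ) = 9 := by norm_num [show K0edges.card = 9 from by decide]
        have h6 : ((suppCard K0edges : ℕ) : ℝ) = 6 := by
          norm_num [show suppCard K0edges = 6 from by decide]
        rw [h9, h6, cK0_total]
        norm_num
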